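/- Define C(r) = -Σ_{s=0}^{r-1} Σ_{t=0}^{r-1} OF(2s+2t-2) / (2^{2s+2t} s! t!), where OF is the odd factorial extended by OF(-2n) = (-1)^n / OF(2n) and OF(0) = 1. Then for every positive integer r, C(r) = Γ(2r - 3/2)/(√π Γ(2r-1)) + Σ_{s=0}^{r-2} (Γ(r+s-1/2)/(√π Γ(r+s+1))) I_{1/2}(r, s+1), where I_{1/2}(a,b) is the regularized incomplete beta function at 1/2 (the sum over s being empty when r = 1). -/

import Mathlib

open Real Finset intervalIntegral

/-- Odd factorial OF(2k) as a function of k ∈ ℤ: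
    OF(2k) = ∏_{i=1}^k (2i-1) for k ≥ 0, and OF(-2k) = (-1)^k / OF(2k). -/
noncomputable def OF2 (k : ℤ) : ℝ :=
  if 0 ≤ k then ∏ i ∈ Finset.range k.toNat, (2 * (i : ℝ) + 1)
  else (-1) ^ (-k).toNat / ∏ i ∈ Finset.range (-k).toNat, (2 * (i : ℝ) + 1)

/-- C(r) = -Σ_{s,t=0}^{r-1} OF(2s+2t-2) / (2^{2s+2t} s! t!). -/
noncomputable def Cconst (r : ℕ) : ℝ :=
  -∑ s ∈ Finset.range r, ∑ t ∈ Finset.range r,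
      OF2 ((s : ℤ) + t - 1) / (2 ^ (2 * s + 2 * t) * Nat.factorial s * Nat.factorial t)

/-- Regularized incomplete beta function I_z(a, b). -/
noncomputable def regIncBeta (z a b : ℝ) : ℝ :=
  (∫ t in (0 : ℝ)..z, t ^ (a - 1) * (1 - t) ^ (b - 1)) /
    ∫ t in (0 : ℝ)..1, t ^ (a - 1) * (1 - t) ^ (b - 1)


noncomputable def ofr (k : ℕ) : ℝ := ∏ i ∈ Finset.range k, (2 * (i : ℝ) + 1)

lemma ofr_succ (k : ℕ) : ofr (k+1) = ofr k * (2*k+1) := by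
  simp [ofr, Finset.prod_range_succ]

lemma ofr_pos (k : ℕ) : 0 < ofr k := by
  apply Finset.prod_pos; intro i _; positivity

lemma Gamma_nat_add_half (n : ℕ) : Real.Gamma ((n:ℝ) + 1/2) = ofr n * Real.sqrt π / 2^n := by
  induction n with
  | zero => simp [ofr]; rw [show (2:ℝ)⁻¹ = 1/2 by norm_num, Real.Gamma_one_half_eq]
  | succ n ih =>
    have h : ((n:ℝ)+1) + 1/2 = ((n:ℝ) + 1/2) + 1 := by ring
    push_cast
    rw [h, Real.Gamma_add_one (by positivity), ih, ofr_succ]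
    push_cast
    ring

-- telescoping
lemma sqrt_telescope (N : ℕ) :
    1 - ∑ n ∈ Finset.range N, ofr n / (2^(n+1) * (Nat.factorial (n+1))) = ofr N / (2^N * Nat.factorial N) := by
  induction N with
  | zero => simp [ofr]
  | succ N ih =>
    rw [Finset.sum_range_succ, sub_add_eq_sub_sub, ih, ofr_succ]
    have h1 : (Nat.factorial (N+1) : ℝ) = (N+1) * Nat.factorial N := by
      push_cast [Nat.factorial_succ]; ring
    have h2 : (Nat.factorial N : ℝ) ≠ 0 := Nat.cast_ne_zero.2 (Nat.factorial_ne_zero N)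
    rw [h1]
    field_simp
    ring


lemma choose_mul_left (N a : ℕ) (ha : 1 ≤ a) : a * N.choose a = N * (N-1).choose (a-1) := by
  obtain ⟨b, rfl⟩ : ∃ b, a = b + 1 := ⟨a - 1, by omega⟩
  cases N with
  | zero => simp [Nat.choose_eq_zero_of_lt (by omega : (0:ℕ) < b+1)]
  | succ M =>
    have h := Nat.add_one_mul_choose_eq M b
    simp only [Nat.add_sub_cancel]
    rw [Nat.mul_comm, h, Nat.mul_comm]

lemma choose_mul_right (N a : ℕ) (ha : a ≤ N) : (N - a) * N.choose a = N * (N-1).choose a := by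
  rcases eq_or_lt_of_le ha with rfl | h
  · rcases Nat.eq_zero_or_pos a with rfl | hpos
    · simp
    · simp [Nat.choose_eq_zero_of_lt (by omega : a - 1 < a)]
  · have h1 : N.choose a = N.choose (N - a) := (Nat.choose_symm ha).symm
    have h2 := choose_mul_left N (N - a) (by omega)
    have h3 : (N-1).choose (N - a - 1) = (N-1).choose a := by
      rw [← Nat.choose_symm (by omega : N - a - 1 ≤ N - 1)]
      congr 1; omega
    rw [h1, h2, h3]

noncomputable def Gfun (m n : ℕ) (x : ℝ) : ℝ :=
  ∑ j ∈ Finset.range (n+1), (Nat.choose (m+n) (m+j) : ℝ) * x^(m+j) * (1-x)^(n-j)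

lemma hasDerivAt_Gfun (m n : ℕ) (hm : 1 ≤ m) (t : ℝ) :
    HasDerivAt (Gfun m n)
      (((m+n : ℕ) : ℝ) * ((m+n-1).choose (m-1)) * (t^(m-1) * (1-t)^n)) t := by
  set N := m + n with hN
  set v : ℕ → ℝ := fun j =>
    (N:ℝ) * ((N-1).choose (m+j-1)) * t^(m+j-1) * (1-t)^(N-1-(m+j-1)) with hv
  have key : ∀ j ∈ Finset.range (n+1),
      HasDerivAt (fun x : ℝ => (Nat.choose N (m+j) : ℝ) * x^(m+j) * (1-x)^(n-j))
        (v j - v (j+1)) t := by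
    intro j hj
    simp only [Finset.mem_range] at hj
    have hjn : j ≤ n := by omega
    have h1 : HasDerivAt (fun x : ℝ => x^(m+j)) (((m+j:ℕ):ℝ) * t^(m+j-1)) t := by
      simpa using hasDerivAt_pow (m+j) t
    have hb : HasDerivAt (fun x : ℝ => 1 - x) (-1) t := by
      simpa using (hasDerivAt_id t).const_sub 1
    have h2 : HasDerivAt (fun x : ℝ => (1-x)^(n-j)) (-(((n-j:ℕ):ℝ) * (1-t)^(n-j-1))) t := by
      have := hb.fun_pow (n-j)
      refine this.congr_deriv (Eq.symm ?_)
      push_cast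
      ring
    have h3 := (h1.const_mul ((Nat.choose N (m+j) : ℝ))).mul h2
    have c1 : ((m+j:ℕ):ℝ) * (Nat.choose N (m+j)) = (N:ℝ) * ((N-1).choose (m+j-1)) := by
      exact_mod_cast congrArg (Nat.cast (R := ℝ)) (choose_mul_left N (m+j) (by omega))
    push_cast at c1
    refine h3.congr_deriv (Eq.symm ?_)
    simp only [hv]
    have ea : N - 1 - (m + j - 1) = n - j := by omega
    have eaa : m + (j+1) - 1 = m + j := by omega
    rw [ea, eaa]
    rcases Nat.eq_zero_or_pos (n - j) with h0 | hpos
    · have hz : (N-1).choose (m+j) = 0 := Nat.choose_eq_zero_of_lt (by omega)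
      rw [hz, h0]
      push_cast [h0]
      linear_combination -(t^(m+j-1)*(1-t)^(0:ℕ)) * c1
    · have eb : N - 1 - (m+j) = n - j - 1 := by omega
      have c2 : ((n-j:ℕ):ℝ) * (Nat.choose N (m+j)) = (N:ℝ) * ((N-1).choose (m+j)) := by
        have h := choose_mul_right N (m+j) (by omega)
        have hx : N - (m+j) = n - j := by omega
        rw [hx] at h
        exact_mod_cast congrArg (Nat.cast (R := ℝ)) h
      push_cast at c2
      rw [eb]
      push_cast
      linear_combination -(t^(m+j-1)*(1-t)^(n-j)) * c1 + (t^(m+j)*(1-t)^(n-j-1)) * c2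
  have hsum := HasDerivAt.fun_sum key
  have tele : ∑ j ∈ Finset.range (n+1), (v j - v (j+1)) = v 0 - v (n+1) :=
    Finset.sum_range_sub' v (n+1)
  rw [tele] at hsum
  have hv0 : v 0 = (N:ℝ) * ((N-1).choose (m-1)) * (t^(m-1) * (1-t)^n) := by
    simp only [hv]
    have : N - 1 - (m + 0 - 1) = n := by omega
    rw [this]
    ring_nf
  have hvn : v (n+1) = 0 := by
    simp only [hv]
    have : (N-1).choose (m+(n+1)-1) = 0 := Nat.choose_eq_zero_of_lt (by omega)
    rw [this]
    ring
  rw [hv0, hvn, sub_zero] at hsum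
  exact hsum

lemma Gfun_zero (m n : ℕ) (hm : 1 ≤ m) : Gfun m n 0 = 0 := by
  unfold Gfun
  apply Finset.sum_eq_zero
  intro j _
  rw [zero_pow (by omega)]
  ring

lemma Gfun_one (m n : ℕ) : Gfun m n 1 = 1 := by
  unfold Gfun
  rw [Finset.sum_eq_single n]
  · simp
  · intro j hj hne
    simp only [Finset.mem_range] at hj
    rw [show (1:ℝ) - 1 = 0 by ring, zero_pow (by omega)]
    ring
  · intro h
    exact absurd (Finset.self_mem_range_succ n) h

lemma Gfun_half (m n : ℕ) :
    Gfun m n (1/2) = (∑ j ∈ Finset.range (n+1), (Nat.choose (m+n) (m+j) : ℝ)) / 2^(m+n) := by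
  unfold Gfun
  rw [Finset.sum_div]
  apply Finset.sum_congr rfl
  intro j hj
  simp only [Finset.mem_range] at hj
  rw [show (1:ℝ) - 1/2 = 1/2 by ring, div_pow, div_pow, one_pow, one_pow]
  have e : m + j + (n - j) = m + n := by omega
  calc (↑((m + n).choose (m + j)) : ℝ) * (1/2^(m+j)) * (1/2^(n-j))
      = ↑((m + n).choose (m + j)) / (2^(m+j) * 2^(n-j)) := by ring
    _ = ↑((m + n).choose (m + j)) / 2^(m+n) := by rw [← pow_add, e]

lemma integral_eval (m n : ℕ) (hm : 1 ≤ m) (z : ℝ) :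
    ∫ t in (0:ℝ)..z, (t^(m-1) * (1-t)^n)
      = Gfun m n z / (((m+n : ℕ) : ℝ) * ((m+n-1).choose (m-1))) := by
  have hK : (0:ℝ) < ((m+n : ℕ) : ℝ) * ((m+n-1).choose (m-1)) := by
    have h1 : 0 < m + n := by omega
    have h2 : 0 < (m+n-1).choose (m-1) := Nat.choose_pos (by omega)
    positivity
  set K : ℝ := ((m+n : ℕ) : ℝ) * ((m+n-1).choose (m-1)) with hKdef
  have hftc : ∫ t in (0:ℝ)..z, K * (t^(m-1) * (1-t)^n) = Gfun m n z - Gfun m n 0 := by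
    apply intervalIntegral.integral_eq_sub_of_hasDerivAt
    · intro t _
      exact hasDerivAt_Gfun m n hm t
    · apply Continuous.intervalIntegrable
      continuity
  rw [intervalIntegral.integral_const_mul, Gfun_zero m n hm, sub_zero] at hftc
  rw [eq_div_iff (ne_of_gt hK), mul_comm]
  exact hftc

lemma regIncBeta_half (m n : ℕ) (hm : 1 ≤ m) :
    regIncBeta (1/2) m ((n:ℝ)+1)
      = (∑ j ∈ Finset.range (n+1), (Nat.choose (m+n) (m+j) : ℝ)) / 2^(m+n) := by
  unfold regIncBeta
  have e1 : ((m:ℝ) - 1) = ((m-1 : ℕ) : ℝ) := by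
    push_cast [hm]; ring
  have e2 : ((n:ℝ) + 1 - 1) = ((n : ℕ) : ℝ) := by push_cast; ring
  rw [e1, e2]
  simp only [Real.rpow_natCast]
  rw [integral_eval m n hm, integral_eval m n hm, Gfun_one]
  have hK : (0:ℝ) < ((m+n : ℕ) : ℝ) * ((m+n-1).choose (m-1)) := by
    have h1 : 0 < m + n := by omega
    have h2 : 0 < (m+n-1).choose (m-1) := Nat.choose_pos (by omega)
    positivity
  have hcanc : Gfun m n (1/2) / (((m+n : ℕ) : ℝ) * ((m+n-1).choose (m-1)))
      / (1 / (((m+n : ℕ) : ℝ) * ((m+n-1).choose (m-1)))) = Gfun m n (1/2) := by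
    rw [div_div_eq_mul_div, div_one, div_mul_cancel₀ _ (ne_of_gt hK)]
  rw [hcanc]
  exact Gfun_half m n

lemma fiber_sum (r : ℕ) (f : ℕ → ℕ → ℝ) :
    ∑ s ∈ Finset.range r, ∑ t ∈ Finset.range r, f s t
    = ∑ k ∈ Finset.range (2*r - 1),
        ∑ s ∈ (Finset.range r).filter (fun s => s ≤ k ∧ k - s < r), f s (k - s) := by
  rw [show (∑ s ∈ Finset.range r, ∑ t ∈ Finset.range r, f s t)
      = ∑ p ∈ (Finset.range r).sigma (fun _ => Finset.range r), f p.1 p.2 from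
      Finset.sum_sigma' _ _ _,
    show (∑ k ∈ Finset.range (2*r - 1),
        ∑ s ∈ (Finset.range r).filter (fun s => s ≤ k ∧ k - s < r), f s (k - s))
      = ∑ p ∈ (Finset.range (2*r-1)).sigma
          (fun k => (Finset.range r).filter (fun s => s ≤ k ∧ k - s < r)), f p.2 (p.1 - p.2) from
      Finset.sum_sigma' _ _ _]
  apply Finset.sum_nbij' (i := fun p => (⟨p.1 + p.2, p.1⟩ : Σ _ : ℕ, ℕ))
    (j := fun p => (⟨p.2, p.1 - p.2⟩ : Σ _ : ℕ, ℕ))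
  · intro a ha
    simp only [Finset.mem_sigma, Finset.mem_range] at ha
    simp only [Finset.mem_sigma, Finset.mem_range, Finset.mem_filter]
    omega
  · intro a ha
    simp only [Finset.mem_sigma, Finset.mem_range, Finset.mem_filter] at ha
    simp only [Finset.mem_sigma, Finset.mem_range]
    omega
  · intro a ha
    simp only [Finset.mem_sigma, Finset.mem_range] at ha
    simp only [Nat.add_sub_cancel_left]
  · intro a ha
    simp only [Finset.mem_sigma, Finset.mem_range, Finset.mem_filter] at ha
    have : a.2 + (a.1 - a.2) = a.1 := by omega
    exact Sigma.ext this (by simp)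
  · intro a ha
    simp only [Nat.add_sub_cancel_left]

lemma fiberA_lt (r k : ℕ) (hk : k < r) :
    ∑ s ∈ (Finset.range r).filter (fun s => s ≤ k ∧ k - s < r), Nat.choose k s = 2^k := by
  have hset : (Finset.range r).filter (fun s => s ≤ k ∧ k - s < r) = Finset.range (k+1) := by
    ext s
    simp only [Finset.mem_filter, Finset.mem_range]
    omega
  rw [hset, Nat.sum_range_choose]

lemma Ico_choose (k r : ℕ) (h : r ≤ k) :
    ∑ s ∈ Finset.Ico r (k+1), Nat.choose k s = ∑ q ∈ Finset.range (k - r + 1), Nat.choose k q := by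
  apply Finset.sum_nbij' (i := fun s => k - s) (j := fun q => k - q)
  · intro a ha; simp only [Finset.mem_Ico] at ha; simp only [Finset.mem_range]; omega
  · intro a ha; simp only [Finset.mem_range] at ha; simp only [Finset.mem_Ico]; omega
  · intro a ha; simp only [Finset.mem_Ico] at ha; omega
  · intro a ha; simp only [Finset.mem_range] at ha; omega
  · intro a ha; simp only [Finset.mem_Ico] at ha
    exact (Nat.choose_symm (by omega)).symm

lemma fiberA_ge (r k : ℕ) (hr : 1 ≤ r) (h1 : r ≤ k) (h2 : k ≤ 2*r - 2) :
    (∑ s ∈ (Finset.range r).filter (fun s => s ≤ k ∧ k - s < r), Nat.choose k s)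
      + 2 * ∑ q ∈ Finset.range (k - r + 1), Nat.choose k q = 2^k := by
  have hset : (Finset.range r).filter (fun s => s ≤ k ∧ k - s < r) = Finset.Ico (k-r+1) r := by
    ext s
    simp only [Finset.mem_filter, Finset.mem_range, Finset.mem_Ico]
    omega
  have e1 : ∑ s ∈ Finset.Ico 0 (k-r+1), Nat.choose k s + ∑ s ∈ Finset.Ico (k-r+1) r, Nat.choose k s
      = ∑ s ∈ Finset.Ico 0 r, Nat.choose k s :=
    Finset.sum_Ico_consecutive _ (by omega) (by omega)
  have e2 : ∑ s ∈ Finset.Ico 0 r, Nat.choose k s + ∑ s ∈ Finset.Ico r (k+1), Nat.choose k s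
      = ∑ s ∈ Finset.Ico 0 (k+1), Nat.choose k s :=
    Finset.sum_Ico_consecutive _ (by omega) (by omega)
  have e3 : ∑ s ∈ Finset.Ico 0 (k+1), Nat.choose k s = 2^k := by
    rw [← Finset.range_eq_Ico, Nat.sum_range_choose]
  rw [hset]
  have e4 := Ico_choose k r h1
  simp only [← Finset.range_eq_Ico] at e1 e2 e3
  omega

lemma sym_sum (r s : ℕ) :
    ∑ j ∈ Finset.range (s+1), Nat.choose (r+s) (r+j)
      = ∑ q ∈ Finset.range (s+1), Nat.choose (r+s) q := by
  rw [← Finset.sum_range_reflect (fun j => Nat.choose (r+s) (r+j)) (s+1)]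
  apply Finset.sum_congr rfl
  intro j hj
  simp only [Finset.mem_range] at hj
  have e : r + (s + 1 - 1 - j) = (r + s) - j := by omega
  rw [e, Nat.choose_symm (by omega)]

lemma OF2_neg_one : OF2 (-1) = -1 := by
  norm_num [OF2]

lemma OF2_natCast (k : ℕ) : OF2 (k : ℤ) = ofr k := by
  simp [OF2, ofr]

theorem Cconst_gamma_form (r : ℕ) (hr : 1 ≤ r) :
    Cconst r
      = Real.Gamma (2 * r - 3 / 2) / (Real.sqrt π * Real.Gamma (2 * r - 1)) +
        ∑ s ∈ Finset.range (r - 1),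
          Real.Gamma ((r : ℝ) + s - 1 / 2) / (Real.sqrt π * Real.Gamma ((r : ℝ) + s + 1)) *
            regIncBeta (1 / 2) r (s + 1) := by
  obtain ⟨d, rfl⟩ : ∃ d, r = d + 1 := ⟨r - 1, by omega⟩
  have hsqrtpi : Real.sqrt π ≠ 0 := by positivity
  set F : ℕ → Finset ℕ := fun k => (Finset.range (d+1)).filter (fun s => s ≤ k ∧ k - s < d+1)
    with hF
  set A : ℕ → ℕ := fun k => ∑ s ∈ F k, Nat.choose k s with hA
  set B : ℕ → ℝ := fun k => ((∑ q ∈ Finset.range (k - (d+1) + 1), Nat.choose k q : ℕ) : ℝ)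
    with hB
  have step1 : Cconst (d+1)
      = -∑ k ∈ Finset.range (2*d+1), ∑ s ∈ F k,
          OF2 ((s : ℤ) + (k - s : ℕ) - 1)
            / (2 ^ (2 * s + 2 * (k - s)) * Nat.factorial s * Nat.factorial (k - s)) := by
    unfold Cconst
    rw [fiber_sum (d+1) (fun s t => OF2 ((s : ℤ) + t - 1)
      / (2 ^ (2 * s + 2 * t) * Nat.factorial s * Nat.factorial t))]
    norm_num [hF]
    rw [show 2*(d+1)-1 = 2*d+1 from by omega]
  have step2 : ∑ k ∈ Finset.range (2*d+1), ∑ s ∈ F k,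
        OF2 ((s : ℤ) + (k - s : ℕ) - 1)
          / (2 ^ (2 * s + 2 * (k - s)) * Nat.factorial s * Nat.factorial (k - s))
      = -1 + ∑ k ∈ Finset.Ico 1 (2*d+1), ∑ s ∈ F k,
          OF2 ((s : ℤ) + (k - s : ℕ) - 1)
            / (2 ^ (2 * s + 2 * (k - s)) * Nat.factorial s * Nat.factorial (k - s)) := by
    rw [Finset.range_eq_Ico,
      ← Finset.sum_Ico_consecutive _ (by omega : (0:ℕ) ≤ 1) (by omega : 1 ≤ 2*d+1)]
    congr 1
    rw [show Finset.Ico 0 1 = {0} from rfl, Finset.sum_singleton]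
    have hF0 : F 0 = {0} := by
      ext s
      simp only [hF, Finset.mem_filter, Finset.mem_range, Finset.mem_singleton]
      omega
    rw [hF0, Finset.sum_singleton]
    norm_num [OF2_neg_one]
  have hinner : ∀ k ∈ Finset.Ico 1 (2*d+1),
      (∑ s ∈ F k, OF2 ((s : ℤ) + (k - s : ℕ) - 1)
          / (2 ^ (2 * s + 2 * (k - s)) * Nat.factorial s * Nat.factorial (k - s)))
        = ofr (k-1) / (2 ^ (2*k) * Nat.factorial k) * (A k : ℝ) := by
    intro k hk
    simp only [Finset.mem_Ico] at hk
    rw [hA]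
    push_cast [Nat.cast_sum]
    rw [Finset.mul_sum]
    apply Finset.sum_congr rfl
    intro s hs
    simp only [hF, Finset.mem_filter, Finset.mem_range] at hs
    have e1 : (s : ℤ) + (k - s : ℕ) - 1 = ((k - 1 : ℕ) : ℤ) := by push_cast; omega
    have e2 : 2 * s + 2 * (k - s) = 2 * k := by omega
    rw [e1, e2, OF2_natCast]
    have e3 : (Nat.choose k s : ℝ) * Nat.factorial s * Nat.factorial (k - s)
        = Nat.factorial k := by
      exact_mod_cast congrArg (Nat.cast (R := ℝ))
        (Nat.choose_mul_factorial_mul_factorial (by omega : s ≤ k))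
    have hp1 : (0:ℝ) < Nat.factorial s := by exact_mod_cast Nat.factorial_pos s
    have hp2 : (0:ℝ) < Nat.factorial (k-s) := by exact_mod_cast Nat.factorial_pos (k-s)
    have hp3 : (0:ℝ) < Nat.factorial k := by exact_mod_cast Nat.factorial_pos k
    have hpw : (0:ℝ) < 2 ^ (2*k) := by positivity
    rw [div_mul_eq_mul_div, div_eq_div_iff (mul_pos (mul_pos hpw hp1) hp2).ne' (mul_pos hpw hp3).ne']
    linear_combination -(ofr (k-1) * (2:ℝ) ^ (2*k)) * e3
  have key : ∀ k ∈ Finset.Ico 1 (2*d+1),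
      ofr (k-1) / (2 ^ (2*k) * Nat.factorial k) * (A k : ℝ)
        = ofr (k-1) / (2 ^ k * Nat.factorial k)
          - (if d + 1 ≤ k then 2 * ofr (k-1) * B k / (2 ^ (2*k) * Nat.factorial k) else 0) := by
    intro k hk
    simp only [Finset.mem_Ico] at hk
    have hne3 : (Nat.factorial k : ℝ) ≠ 0 := Nat.cast_ne_zero.2 (Nat.factorial_ne_zero _)
    have hpow : (2:ℝ) ^ (2*k) = 2 ^ k * 2 ^ k := by
      rw [show 2*k = k + k by ring, pow_add]
    by_cases hdk : d + 1 ≤ k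
    · rw [if_pos hdk]
      have hge := fiberA_ge (d+1) k (by omega) hdk (by omega)
      have hgeR : ((A k : ℕ) : ℝ) + 2 * B k = 2 ^ k := by
        simp only [hA, hB]
        exact_mod_cast hge
      have hge' : (A k : ℝ) = 2 ^ k - 2 * B k := by linarith
      rw [hge', hpow]
      field_simp
    · rw [if_neg hdk]
      have hlt : (A k : ℝ) = 2 ^ k := by
        rw [hA]
        exact_mod_cast congrArg (Nat.cast (R := ℝ)) (fiberA_lt (d+1) k (by omega))
      rw [hlt, hpow]
      field_simp
      ring
  have step3 : ∑ k ∈ Finset.Ico 1 (2*d+1),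
        ofr (k-1) / (2 ^ (2*k) * Nat.factorial k) * (A k : ℝ)
      = (∑ k ∈ Finset.Ico 1 (2*d+1), ofr (k-1) / (2 ^ k * Nat.factorial k))
        - ∑ k ∈ Finset.Ico (d+1) (2*d+1),
            2 * ofr (k-1) * B k / (2 ^ (2*k) * Nat.factorial k) := by
    rw [Finset.sum_congr rfl key, Finset.sum_sub_distrib]
    congr 1
    rw [← Finset.sum_filter]
    apply Finset.sum_congr
    · ext k
      simp only [Finset.mem_filter, Finset.mem_Ico]
      omega
    · intros; rfl
  have tele : 1 - ∑ k ∈ Finset.Ico 1 (2*d+1), ofr (k-1) / (2 ^ k * Nat.factorial k)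
      = ofr (2*d) / (2 ^ (2*d) * Nat.factorial (2*d)) := by
    rw [Finset.sum_Ico_eq_sum_range]
    have hc : ∀ i ∈ Finset.range (2*d+1-1),
        ofr (1 + i - 1) / (2 ^ (1+i) * Nat.factorial (1+i))
          = ofr i / (2 ^ (i+1) * Nat.factorial (i+1)) := by
      intro i _
      have a1 : 1 + i - 1 = i := by omega
      have a2 : 1 + i = i + 1 := by omega
      rw [a1, a2]
    rw [Finset.sum_congr rfl hc, show 2*d+1-1 = 2*d by omega, sqrt_telescope (2*d)]
  have reidx : ∑ k ∈ Finset.Ico (d+1) (2*d+1),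
        2 * ofr (k-1) * B k / (2 ^ (2*k) * Nat.factorial k)
      = ∑ s ∈ Finset.range d,
          2 * ofr (d+s) * B (d+1+s) / (2 ^ (2*(d+1+s)) * Nat.factorial (d+1+s)) := by
    rw [Finset.sum_Ico_eq_sum_range, show 2*d+1-(d+1) = d by omega]
    apply Finset.sum_congr rfl
    intro i _
    have a1 : d + 1 + i - 1 = d + i := by omega
    rw [a1]
  have rhs1 : Real.Gamma (2 * ((d+1:ℕ):ℝ) - 3 / 2)
        / (Real.sqrt π * Real.Gamma (2 * ((d+1:ℕ):ℝ) - 1))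
      = ofr (2*d) / (2 ^ (2*d) * Nat.factorial (2*d)) := by
    have e1 : 2 * ((d+1:ℕ):ℝ) - 3 / 2 = ((2*d : ℕ):ℝ) + 1/2 := by push_cast; ring
    have e2 : 2 * ((d+1:ℕ):ℝ) - 1 = ((2*d : ℕ):ℝ) + 1 := by push_cast; ring
    rw [e1, e2, _root_.Gamma_nat_add_half, Real.Gamma_nat_eq_factorial]
    have hne : (Nat.factorial (2*d) : ℝ) ≠ 0 := Nat.cast_ne_zero.2 (Nat.factorial_ne_zero _)
    field_simp
  have rhsterm : ∀ s ∈ Finset.range d,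
      Real.Gamma (((d+1:ℕ):ℝ) + s - 1 / 2) / (Real.sqrt π * Real.Gamma (((d+1:ℕ):ℝ) + s + 1)) *
          regIncBeta (1 / 2) ((d+1:ℕ):ℝ) ((s:ℝ) + 1)
        = 2 * ofr (d+s) * B (d+1+s) / (2 ^ (2*(d+1+s)) * Nat.factorial (d+1+s)) := by
    intro s _
    have e1 : ((d+1:ℕ):ℝ) + s - 1 / 2 = ((d+s : ℕ):ℝ) + 1/2 := by push_cast; ring
    have e2 : ((d+1:ℕ):ℝ) + s + 1 = ((d+1+s : ℕ):ℝ) + 1 := by push_cast; ring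
    rw [e1, e2, _root_.Gamma_nat_add_half, Real.Gamma_nat_eq_factorial,
      regIncBeta_half (d+1) s (by omega)]
    have e3 : B (d+1+s) = ∑ j ∈ Finset.range (s+1), (Nat.choose (d+1+s) (d+1+j) : ℝ) := by
      simp only [hB, show d+1+s-(d+1)+1 = s+1 from by omega]
      rw [← sym_sum (d+1) s]
      push_cast
      rfl
    rw [e3]
    have hne : (Nat.factorial (d+1+s) : ℝ) ≠ 0 := Nat.cast_ne_zero.2 (Nat.factorial_ne_zero _)
    have hpow : (2:ℝ) ^ (2*(d+1+s)) = 2 ^ (d+s) * 2 ^ (d+1+s) * 2 := by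
      rw [show 2*(d+1+s) = (d+s) + (d+1+s) + 1 by ring, pow_add, pow_add, pow_one]
    rw [hpow]
    field_simp
  rw [step1, step2, Finset.sum_congr rfl hinner, step3, reidx]
  rw [show (Finset.range (d+1-1)) = Finset.range d by congr 1]
  rw [Finset.sum_congr rfl rhsterm]
  rw [rhs1]
  linarith [tele]
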